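/- Let Ω be a finite set and P₀, P₁ probability distributions on Ω^N with P₀ = q₁ ⊗ ⋯ ⊗ q_N a product measure of full-support distributions. Suppose P₁ is the mixture over ζ ~ D of distributions P₁|ζ whose density with respect to P₀ at x_{≤t} factorizes as ∏_{i=1}^t (1 + g^ζ_{x_{<i}}(x_i)), where each g^ζ_{x_{<i}} : Ω → ℝ satisfies E_{x ~ p₀(·|x_{<i})}[g^ζ_{x_{<i}}(x)] = 0. Then KL(P₁‖P₀) ≤ Σ_{t=1}^N E_{x_{<t} ~ P₀}[(1/Δ(x_{<t}))·E_{ζ,ζ' ~ D iid}[φ^{ζ,ζ'}_{x_{<t}}·Ψ^{ζ,ζ'}_{x_{<t}}]], where Δ(x_{<t}) = E_ζ[∏_{i<t}(1+g^ζ_{x_{<i}}(x_i))], φ^{ζ,ζ'}_{x_{<t}} = E_{x ~ p₀(·|x_{<t})}[g^ζ_{x_{<t}}(x)·g^{ζ'}_{x_{<t}}(x)], and Ψ^{ζ,ζ'}_{x_{<t}} = ∏_{i<t}(1+g^ζ_{x_{<i}}(x_i))(1+g^{ζ'}_{x_{<i}}(x_i)). -/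

import Mathlib

open Finset

set_option linter.unusedSectionVars false
set_option maxHeartbeats 1000000

section AuxKL

variable {Ω Z : Type*} [Fintype Ω] [Fintype Z] {N : ℕ}
variable (q : Fin N → Ω → ℝ) (D : Z → ℝ) (g : Z → Fin N → List Ω → Ω → ℝ)

/-- product of likelihood factors up to time `k` -/
def auxLF (ζ : Z) (x : Fin N → Ω) (k : ℕ) : ℝ :=
  ∏ i ∈ Finset.univ.filter (fun i : Fin N => (i : ℕ) < k),
    (1 + g ζ i ((List.ofFn x).take (i : ℕ)) (x i))

/-- mixture likelihood ratio of the first `k` coordinates -/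
def auxDl (x : Fin N → Ω) (k : ℕ) : ℝ := ∑ ζ, D ζ * auxLF g ζ x k

lemma pref_update (x : Fin N → Ω) (s : Fin N) (ω : Ω) {k : ℕ} (hk : k ≤ (s : ℕ)) :
    (List.ofFn (Function.update x s ω)).take k = (List.ofFn x).take k := by
  apply List.ext_getElem
  · simp
  · intro i h1 h2
    have hiN : i < N := by simp [List.length_take] at h1; omega
    have hik : i < k := by simp [List.length_take] at h1; omega
    have hne : (⟨i, hiN⟩ : Fin N) ≠ s :=
      Fin.ne_of_val_ne (Nat.ne_of_lt (lt_of_lt_of_le hik hk))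
    simp only [List.getElem_take, List.getElem_ofFn]
    exact Function.update_of_ne hne ω x

lemma auxLF_update (ζ : Z) (x : Fin N → Ω) (s : Fin N) (ω : Ω) {k : ℕ} (hk : k ≤ (s : ℕ)) :
    auxLF g ζ (Function.update x s ω) k = auxLF g ζ x k := by
  unfold auxLF
  refine Finset.prod_congr rfl fun i hi => ?_
  simp only [mem_filter, mem_univ, true_and] at hi
  have his : (i : ℕ) < (s : ℕ) := lt_of_lt_of_le hi hk
  rw [pref_update x s ω (le_of_lt (lt_of_lt_of_le hi hk)),
    Function.update_of_ne (Fin.ne_of_val_ne (Nat.ne_of_lt his))]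

lemma auxDl_update (x : Fin N → Ω) (s : Fin N) (ω : Ω) {k : ℕ} (hk : k ≤ (s : ℕ)) :
    auxDl D g (Function.update x s ω) k = auxDl D g x k := by
  unfold auxDl
  exact Finset.sum_congr rfl fun ζ _ => by rw [auxLF_update g ζ x s ω hk]

lemma auxLF_succ (ζ : Z) (x : Fin N → Ω) (s : Fin N) :
    auxLF g ζ x ((s : ℕ) + 1)
      = auxLF g ζ x (s : ℕ) * (1 + g ζ s ((List.ofFn x).take (s : ℕ)) (x s)) := by
  unfold auxLF
  have hins : Finset.univ.filter (fun i : Fin N => (i : ℕ) < (s : ℕ) + 1)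
      = insert s (Finset.univ.filter (fun i : Fin N => (i : ℕ) < (s : ℕ))) := by
    ext i
    simp only [mem_filter, mem_univ, true_and, mem_insert, Fin.ext_iff]
    omega
  rw [hins, Finset.prod_insert (by simp)]
  ring

lemma auxLF_N (ζ : Z) (x : Fin N → Ω) :
    auxLF g ζ x N = ∏ i, (1 + g ζ i ((List.ofFn x).take (i : ℕ)) (x i)) := by
  unfold auxLF
  congr 1
  ext i
  simp [i.isLt]

lemma auxLF_nonneg (hpos : ∀ ζ t xs ω, 0 ≤ 1 + g ζ t xs ω) (ζ : Z) (x : Fin N → Ω) (k : ℕ) :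
    0 ≤ auxLF g ζ x k :=
  Finset.prod_nonneg fun i _ => hpos ζ i _ (x i)

lemma auxDl_nonneg (hD0 : ∀ ζ, 0 ≤ D ζ) (hpos : ∀ ζ t xs ω, 0 ≤ 1 + g ζ t xs ω)
    (x : Fin N → Ω) (k : ℕ) : 0 ≤ auxDl D g x k :=
  Finset.sum_nonneg fun ζ _ => mul_nonneg (hD0 ζ) (auxLF_nonneg g hpos ζ x k)

lemma auxDl_zero (hD1 : ∑ ζ, D ζ = 1) (x : Fin N → Ω) : auxDl D g x 0 = 1 := by
  unfold auxDl auxLF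
  simp [hD1]

lemma auxDl_zero_mono (hD0 : ∀ ζ, 0 ≤ D ζ) (hpos : ∀ ζ t xs ω, 0 ≤ 1 + g ζ t xs ω)
    (x : Fin N → Ω) {a b : ℕ} (hab : a ≤ b) (h : auxDl D g x a = 0) : auxDl D g x b = 0 := by
  unfold auxDl at *
  have h1 := (Finset.sum_eq_zero_iff_of_nonneg
    (fun ζ _ => mul_nonneg (hD0 ζ) (auxLF_nonneg g hpos ζ x a))).mp h
  refine Finset.sum_eq_zero fun ζ _ => ?_
  rcases mul_eq_zero.mp (h1 ζ (mem_univ ζ)) with hD | hLF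
  · rw [hD, zero_mul]
  · have : auxLF g ζ x b = 0 := by
      unfold auxLF at hLF ⊢
      obtain ⟨i, hi, hfac⟩ := Finset.prod_eq_zero_iff.mp hLF
      simp only [mem_filter, mem_univ, true_and] at hi
      exact Finset.prod_eq_zero (by simp only [mem_filter, mem_univ, true_and]; omega) hfac
    rw [this, mul_zero]

/-- the swap-coordinate-`s` involution -/
def swapAt [DecidableEq Ω] (s : Fin N) : ((Fin N → Ω) × Ω) ≃ ((Fin N → Ω) × Ω) where
  toFun := fun p => (Function.update p.1 s p.2, p.1 s)
  invFun := fun p => (Function.update p.1 s p.2, p.1 s)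
  left_inv := by intro p; simp [Function.update_idem, Function.update_eq_self]
  right_inv := by intro p; simp [Function.update_idem, Function.update_eq_self]

/-- Replacing the dependence on coordinate `s` by its conditional average. -/
lemma step_lemma [DecidableEq Ω] (hq1 : ∀ t, ∑ x, q t x = 1) (s : Fin N)
    (A : (Fin N → Ω) → ℝ) (B : (Fin N → Ω) → Ω → ℝ)
    (hA : ∀ x ω, A (Function.update x s ω) = A x)
    (hB : ∀ x ω ω', B (Function.update x s ω) ω' = B x ω') :
    ∑ x : Fin N → Ω, (∏ i, q i (x i)) * (A x * B x (x s))
      = ∑ x : Fin N → Ω, (∏ i, q i (x i)) * (A x * ∑ ω, q s ω * B x ω) := by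
  classical
  have key : ∀ (x : Fin N → Ω) (ω : Ω),
      (∏ i, q i (Function.update x s ω i)) = q s ω * ∏ i ∈ univ.erase s, q i (x i) := by
    intro x ω
    have hfun : (fun i => q i (Function.update x s ω i))
        = Function.update (fun i => q i (x i)) s (q s ω) := by
      funext i
      by_cases h : i = s
      · subst h; simp
      · rw [Function.update_of_ne h, Function.update_of_ne h]
    calc ∏ i, q i (Function.update x s ω i)
        = ∏ i, Function.update (fun i => q i (x i)) s (q s ω) i := by rw [hfun]
      _ = q s ω * ∏ i ∈ univ \ {s}, q i (x i) :=
          Finset.prod_update_of_mem (mem_univ s) _ _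
      _ = q s ω * ∏ i ∈ univ.erase s, q i (x i) := by rw [Finset.erase_eq]
  have base : ∀ x : Fin N → Ω,
      (∏ i, q i (x i)) = q s (x s) * ∏ i ∈ univ.erase s, q i (x i) :=
    fun x => (Finset.mul_prod_erase univ _ (mem_univ s)).symm
  calc ∑ x : Fin N → Ω, (∏ i, q i (x i)) * (A x * B x (x s))
      = ∑ x : Fin N → Ω, ∑ ω : Ω, q s ω * ((∏ i, q i (x i)) * (A x * B x (x s))) := by
        refine Finset.sum_congr rfl fun x _ => ?_
        rw [← Finset.sum_mul, hq1 s, one_mul]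
    _ = ∑ p : (Fin N → Ω) × Ω, q s p.2 * ((∏ i, q i (p.1 i)) * (A p.1 * B p.1 (p.1 s))) := by
        rw [Fintype.sum_prod_type]
    _ = ∑ p : (Fin N → Ω) × Ω, (∏ i, q i (p.1 i)) * (A p.1 * (q s p.2 * B p.1 p.2)) := by
        refine (Fintype.sum_equiv (swapAt s) _ _ fun p => ?_).symm
        show (∏ i, q i (p.1 i)) * (A p.1 * (q s p.2 * B p.1 p.2))
          = q s (p.1 s)
            * ((∏ i, q i (Function.update p.1 s p.2 i))
              * (A (Function.update p.1 s p.2) * B (Function.update p.1 s p.2)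
                  (Function.update p.1 s p.2 s)))
        rw [Function.update_self, key, hA, hB, base p.1]
        ring
    _ = ∑ x : Fin N → Ω, (∏ i, q i (x i)) * (A x * ∑ ω, q s ω * B x ω) := by
        rw [Fintype.sum_prod_type]
        refine Finset.sum_congr rfl fun x _ => ?_
        rw [Finset.mul_sum, Finset.mul_sum]

lemma sum_P0 (hq1 : ∀ t, ∑ x, q t x = 1) : ∑ x : Fin N → Ω, ∏ i, q i (x i) = 1 := by
  classical
  have h := Finset.prod_univ_sum (fun _ : Fin N => (univ : Finset Ω)) (fun i j => q i j)
  rw [Fintype.piFinset_univ] at h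
  simp only [hq1, Finset.prod_const_one] at h
  exact h.symm

lemma lf_mean (hq1 : ∀ t, ∑ x, q t x = 1)
    (hmean : ∀ ζ t xs, ∑ ω, q t ω * g ζ t xs ω = 0) (ζ : Z) (t : Fin N) (xs : List Ω) :
    ∑ ω, q t ω * (1 + g ζ t xs ω) = 1 := by
  simp only [mul_add, mul_one, Finset.sum_add_distrib, hq1, hmean, add_zero]

lemma pair_mean (hq1 : ∀ t, ∑ x, q t x = 1)
    (hmean : ∀ ζ t xs, ∑ ω, q t ω * g ζ t xs ω = 0) (ζ ζ' : Z) (t : Fin N) (xs : List Ω) :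
    ∑ ω, q t ω * ((1 + g ζ t xs ω) * (1 + g ζ' t xs ω))
      = 1 + ∑ ω, q t ω * (g ζ t xs ω * g ζ' t xs ω) := by
  have expand : ∀ ω, q t ω * ((1 + g ζ t xs ω) * (1 + g ζ' t xs ω))
      = q t ω + q t ω * g ζ t xs ω + (q t ω * g ζ' t xs ω
        + q t ω * (g ζ t xs ω * g ζ' t xs ω)) := fun ω => by ring
  simp only [expand, Finset.sum_add_distrib, hq1, hmean]
  ring

lemma mean_B (hq1 : ∀ t, ∑ x, q t x = 1)
    (hmean : ∀ ζ t xs, ∑ ω, q t ω * g ζ t xs ω = 0) (s : Fin N) (x : Fin N → Ω) (k : ℕ) :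
    ∑ ω, q s ω * (∑ ζ, D ζ * (auxLF g ζ x k * (1 + g ζ s ((List.ofFn x).take k) ω)))
      = auxDl D g x k := by
  calc ∑ ω, q s ω * (∑ ζ, D ζ * (auxLF g ζ x k * (1 + g ζ s ((List.ofFn x).take k) ω)))
      = ∑ ζ, ∑ ω, q s ω * (D ζ * (auxLF g ζ x k * (1 + g ζ s ((List.ofFn x).take k) ω))) := by
        simp only [Finset.mul_sum]
        exact Finset.sum_comm
    _ = ∑ ζ, D ζ * auxLF g ζ x k
          * ∑ ω, q s ω * (1 + g ζ s ((List.ofFn x).take k) ω) := by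
        refine Finset.sum_congr rfl fun ζ _ => ?_
        rw [Finset.mul_sum]
        exact Finset.sum_congr rfl fun ω _ => by ring
    _ = auxDl D g x k := by
        unfold auxDl
        refine Finset.sum_congr rfl fun ζ _ => ?_
        rw [lf_mean q g hq1 hmean, mul_one]

lemma mean_B2 (hq1 : ∀ t, ∑ x, q t x = 1)
    (hmean : ∀ ζ t xs, ∑ ω, q t ω * g ζ t xs ω = 0) (s : Fin N) (x : Fin N → Ω) (k : ℕ) :
    ∑ ω, q s ω * (∑ ζ, ∑ ζ', D ζ * D ζ' * (auxLF g ζ x k * auxLF g ζ' x k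
        * ((1 + g ζ s ((List.ofFn x).take k) ω) * (1 + g ζ' s ((List.ofFn x).take k) ω))))
      = ∑ ζ, ∑ ζ', D ζ * D ζ'
          * ((1 + ∑ ω, q s ω * (g ζ s ((List.ofFn x).take k) ω * g ζ' s ((List.ofFn x).take k) ω))
            * (auxLF g ζ x k * auxLF g ζ' x k)) := by
  calc ∑ ω, q s ω * (∑ ζ, ∑ ζ', D ζ * D ζ' * (auxLF g ζ x k * auxLF g ζ' x k
        * ((1 + g ζ s ((List.ofFn x).take k) ω) * (1 + g ζ' s ((List.ofFn x).take k) ω))))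
      = ∑ ζ, ∑ ζ', ∑ ω, q s ω * (D ζ * D ζ' * (auxLF g ζ x k * auxLF g ζ' x k
        * ((1 + g ζ s ((List.ofFn x).take k) ω) * (1 + g ζ' s ((List.ofFn x).take k) ω)))) := by
        simp only [Finset.mul_sum]
        rw [Finset.sum_comm]
        exact Finset.sum_congr rfl fun ζ _ => Finset.sum_comm
    _ = ∑ ζ, ∑ ζ', D ζ * D ζ'
          * ((1 + ∑ ω, q s ω * (g ζ s ((List.ofFn x).take k) ω * g ζ' s ((List.ofFn x).take k) ω))
            * (auxLF g ζ x k * auxLF g ζ' x k)) := by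
        refine Finset.sum_congr rfl fun ζ _ => Finset.sum_congr rfl fun ζ' _ => ?_
        have hre : ∀ ω : Ω, q s ω * (D ζ * D ζ' * (auxLF g ζ x k * auxLF g ζ' x k
            * ((1 + g ζ s ((List.ofFn x).take k) ω) * (1 + g ζ' s ((List.ofFn x).take k) ω))))
            = (D ζ * D ζ' * (auxLF g ζ x k * auxLF g ζ' x k))
              * (q s ω * ((1 + g ζ s ((List.ofFn x).take k) ω)
                * (1 + g ζ' s ((List.ofFn x).take k) ω))) := fun ω => by ring
        simp only [hre]
        rw [← Finset.mul_sum, pair_mean q g hq1 hmean]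
        ring

lemma marg [DecidableEq Ω] (hq1 : ∀ t, ∑ x, q t x = 1)
    (hmean : ∀ ζ t xs, ∑ ω, q t ω * g ζ t xs ω = 0) (t : ℕ) (f : (Fin N → Ω) → ℝ)
    (hf : ∀ (x : Fin N → Ω) (s : Fin N) (ω : Ω), t ≤ (s : ℕ) → f (Function.update x s ω) = f x) :
    ∀ k, t ≤ k → k ≤ N →
      ∑ x : Fin N → Ω, (∏ i, q i (x i)) * (auxDl D g x k * f x)
        = ∑ x : Fin N → Ω, (∏ i, q i (x i)) * (auxDl D g x t * f x) := by
  intro k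
  induction k with
  | zero => intro h1 _; obtain rfl : t = 0 := Nat.le_zero.mp h1; rfl
  | succ k ih =>
    intro h1 h2
    rcases Nat.lt_or_ge k (t) with h | h
    · obtain rfl : t = k + 1 := by omega
      rfl
    · have htk : t ≤ k := h
      have hkN : k < N := by omega
      set s : Fin N := ⟨k, hkN⟩ with hs
      have hsk : (s : ℕ) = k := rfl
      have hBup : ∀ (x : Fin N → Ω) (ω ω' : Ω),
          (∑ ζ, D ζ * (auxLF g ζ (Function.update x s ω) k
            * (1 + g ζ s ((List.ofFn (Function.update x s ω)).take k) ω')))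
          = ∑ ζ, D ζ * (auxLF g ζ x k * (1 + g ζ s ((List.ofFn x).take k) ω')) := by
        intro x ω ω'
        rw [pref_update x s ω hsk.ge]
        exact Finset.sum_congr rfl fun ζ _ => by rw [auxLF_update g ζ x s ω hsk.ge]
      have key := step_lemma q hq1 s f
        (fun x ω => ∑ ζ, D ζ * (auxLF g ζ x k * (1 + g ζ s ((List.ofFn x).take k) ω)))
        (fun x ω => hf x s ω (by omega)) hBup
      have hBx : ∀ x : Fin N → Ω,
          (∑ ζ, D ζ * (auxLF g ζ x k * (1 + g ζ s ((List.ofFn x).take k) (x s))))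
            = auxDl D g x (k + 1) := by
        intro x
        unfold auxDl
        refine Finset.sum_congr rfl fun ζ _ => ?_
        rw [show k + 1 = (s : ℕ) + 1 from rfl, auxLF_succ g ζ x s]
      calc ∑ x : Fin N → Ω, (∏ i, q i (x i)) * (auxDl D g x (k+1) * f x)
          = ∑ x : Fin N → Ω, (∏ i, q i (x i)) * (f x
              * (∑ ζ, D ζ * (auxLF g ζ x k * (1 + g ζ s ((List.ofFn x).take k) (x s))))) := by
            refine Finset.sum_congr rfl fun x _ => ?_
            rw [hBx x]; ring
        _ = ∑ x : Fin N → Ω, (∏ i, q i (x i)) * (f x * ∑ ω, q s ω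
              * (∑ ζ, D ζ * (auxLF g ζ x k * (1 + g ζ s ((List.ofFn x).take k) ω)))) := key
        _ = ∑ x : Fin N → Ω, (∏ i, q i (x i)) * (auxDl D g x k * f x) := by
            refine Finset.sum_congr rfl fun x _ => ?_
            rw [mean_B q D g hq1 hmean s x k]; ring
        _ = _ := ih htk (by omega)

lemma sum_P0_Dl [DecidableEq Ω] (hq1 : ∀ t, ∑ x, q t x = 1) (hD1 : ∑ ζ, D ζ = 1)
    (hmean : ∀ ζ t xs, ∑ ω, q t ω * g ζ t xs ω = 0) (k : ℕ) (hk : k ≤ N) :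
    ∑ x : Fin N → Ω, (∏ i, q i (x i)) * auxDl D g x k = 1 := by
  calc ∑ x : Fin N → Ω, (∏ i, q i (x i)) * auxDl D g x k
      = ∑ x : Fin N → Ω, (∏ i, q i (x i)) * (auxDl D g x k * (fun _ => (1:ℝ)) x) := by
        simp
    _ = ∑ x : Fin N → Ω, (∏ i, q i (x i)) * (auxDl D g x 0 * (fun _ => (1:ℝ)) x) :=
        marg q D g hq1 hmean 0 (fun _ => 1) (fun _ _ _ _ => rfl) k (Nat.zero_le k) hk
    _ = ∑ x : Fin N → Ω, ∏ i, q i (x i) := by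
        refine Finset.sum_congr rfl fun x _ => ?_
        rw [auxDl_zero D g hD1]; simp
    _ = 1 := sum_P0 q hq1

lemma sq_expand (t : Fin N) (x : Fin N → Ω) :
    (auxDl D g x ((t : ℕ) + 1))^2
      = ∑ ζ, ∑ ζ', D ζ * D ζ' * (auxLF g ζ x (t : ℕ) * auxLF g ζ' x (t : ℕ)
        * ((1 + g ζ t ((List.ofFn x).take (t : ℕ)) (x t))
          * (1 + g ζ' t ((List.ofFn x).take (t : ℕ)) (x t)))) := by
  have h1 : auxDl D g x ((t : ℕ) + 1)
      = ∑ ζ, D ζ * (auxLF g ζ x (t : ℕ) * (1 + g ζ t ((List.ofFn x).take (t : ℕ)) (x t))) := by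
    unfold auxDl
    exact Finset.sum_congr rfl fun ζ _ => by rw [auxLF_succ g ζ x t]
  rw [h1, sq, Finset.sum_mul_sum]
  exact Finset.sum_congr rfl fun ζ _ => Finset.sum_congr rfl fun ζ' _ => by ring

lemma sum_DD_psi (x : Fin N → Ω) (k : ℕ) :
    ∑ ζ, ∑ ζ', D ζ * D ζ' * (auxLF g ζ x k * auxLF g ζ' x k) = (auxDl D g x k)^2 := by
  rw [sq]
  unfold auxDl
  rw [Finset.sum_mul_sum]
  exact Finset.sum_congr rfl fun ζ _ => Finset.sum_congr rfl fun ζ' _ => by ring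

lemma chi_step [DecidableEq Ω] (hq1 : ∀ t, ∑ x, q t x = 1)
    (hmean : ∀ ζ t xs, ∑ ω, q t ω * g ζ t xs ω = 0) (t : Fin N) :
    ∑ x : Fin N → Ω, (∏ i, q i (x i))
        * ((1 / auxDl D g x (t : ℕ)) * (auxDl D g x ((t : ℕ) + 1))^2)
      = ∑ x : Fin N → Ω, (∏ i, q i (x i)) * ((1 / auxDl D g x (t : ℕ))
          * ∑ ζ, ∑ ζ', D ζ * D ζ'
            * ((1 + ∑ ω, q t ω * (g ζ t ((List.ofFn x).take (t : ℕ)) ω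
                * g ζ' t ((List.ofFn x).take (t : ℕ)) ω))
              * (auxLF g ζ x (t : ℕ) * auxLF g ζ' x (t : ℕ)))) := by
  have hBup : ∀ (x : Fin N → Ω) (ω ω' : Ω),
      (∑ ζ, ∑ ζ', D ζ * D ζ' * (auxLF g ζ (Function.update x t ω) (t : ℕ)
          * auxLF g ζ' (Function.update x t ω) (t : ℕ)
        * ((1 + g ζ t ((List.ofFn (Function.update x t ω)).take (t : ℕ)) ω')
          * (1 + g ζ' t ((List.ofFn (Function.update x t ω)).take (t : ℕ)) ω'))))
      = ∑ ζ, ∑ ζ', D ζ * D ζ' * (auxLF g ζ x (t : ℕ) * auxLF g ζ' x (t : ℕ)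
        * ((1 + g ζ t ((List.ofFn x).take (t : ℕ)) ω')
          * (1 + g ζ' t ((List.ofFn x).take (t : ℕ)) ω'))) := by
    intro x ω ω'
    rw [pref_update x t ω le_rfl]
    exact Finset.sum_congr rfl fun ζ _ => Finset.sum_congr rfl fun ζ' _ => by
      rw [auxLF_update g ζ x t ω le_rfl, auxLF_update g ζ' x t ω le_rfl]
  have key := step_lemma q hq1 t (fun x => 1 / auxDl D g x (t : ℕ))
    (fun x ω => ∑ ζ, ∑ ζ', D ζ * D ζ' * (auxLF g ζ x (t : ℕ) * auxLF g ζ' x (t : ℕ)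
      * ((1 + g ζ t ((List.ofFn x).take (t : ℕ)) ω)
        * (1 + g ζ' t ((List.ofFn x).take (t : ℕ)) ω))))
    (fun x ω => by
      show 1 / auxDl D g (Function.update x t ω) (t : ℕ) = 1 / auxDl D g x (t : ℕ)
      rw [auxDl_update D g x t ω le_rfl]) hBup
  calc ∑ x : Fin N → Ω, (∏ i, q i (x i))
        * ((1 / auxDl D g x (t : ℕ)) * (auxDl D g x ((t : ℕ) + 1))^2)
      = ∑ x : Fin N → Ω, (∏ i, q i (x i)) * ((1 / auxDl D g x (t : ℕ))
          * ∑ ζ, ∑ ζ', D ζ * D ζ' * (auxLF g ζ x (t : ℕ) * auxLF g ζ' x (t : ℕ)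
            * ((1 + g ζ t ((List.ofFn x).take (t : ℕ)) (x t))
              * (1 + g ζ' t ((List.ofFn x).take (t : ℕ)) (x t))))) := by
        refine Finset.sum_congr rfl fun x _ => ?_
        rw [sq_expand D g t x]
    _ = _ := by
        rw [key]
        refine Finset.sum_congr rfl fun x _ => ?_
        rw [mean_B2 q D g hq1 hmean t x (t : ℕ)]

end AuxKL

lemma log_chi_ineq {u v : ℝ} (hu : 0 ≤ u) (hv : 0 ≤ v) (h0 : v = 0 → u = 0) :
    u * (Real.log u - Real.log v) ≤ (1 / v) * u^2 - u := by
  rcases eq_or_lt_of_le hv with hv0 | hvpos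
  · have hu0 : u = 0 := h0 hv0.symm
    simp [hu0]
  rcases eq_or_lt_of_le hu with hu0 | hupos
  · rw [← hu0]
    simp
  · have hlog : Real.log (u / v) ≤ u / v - 1 :=
      Real.log_le_sub_one_of_pos (div_pos hupos hvpos)
    rw [Real.log_div (ne_of_gt hupos) (ne_of_gt hvpos)] at hlog
    have h2 := mul_le_mul_of_nonneg_left hlog hu
    calc u * (Real.log u - Real.log v) ≤ u * (u / v - 1) := h2
      _ = (1 / v) * u^2 - u := by field_simp

lemma one_div_mul_sq (v : ℝ) : (1 / v) * v^2 = v := by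
  rcases eq_or_ne v 0 with h | h
  · simp [h]
  · field_simp

/-- Chain-rule bound on the KL divergence between the mixture of adaptively
perturbed distributions and the base product distribution:
`KL(P₁‖P₀) ≤ Σ_t E_{x_{<t}~P₀}[(1/Δ(x_{<t}))·E_{ζ,ζ'}[φ^{ζ,ζ'}_{x_{<t}}·Ψ^{ζ,ζ'}_{x_{<t}}]]`.
Transcript prefixes are encoded as lists `(List.ofFn x).take t`. -/
theorem stmt9 {Ω Z : Type*} [Fintype Ω] [Fintype Z] (N : ℕ)
    (q : Fin N → Ω → ℝ) (hq0 : ∀ t x, 0 < q t x) (hq1 : ∀ t, ∑ x, q t x = 1)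
    (D : Z → ℝ) (hD0 : ∀ ζ, 0 ≤ D ζ) (hD1 : ∑ ζ, D ζ = 1)
    (g : Z → Fin N → List Ω → Ω → ℝ)
    (hmean : ∀ ζ t xs, ∑ ω, q t ω * g ζ t xs ω = 0)
    (hpos : ∀ ζ t xs ω, 0 ≤ 1 + g ζ t xs ω) :
    let P₀ : (Fin N → Ω) → ℝ := fun x => ∏ t, q t (x t)
    let lf : Z → (Fin N → Ω) → Fin N → Ω → ℝ :=
      fun ζ x i ω => 1 + g ζ i ((List.ofFn x).take (i : ℕ)) ω
    let Δ : (Fin N → Ω) → ℕ → ℝ := fun x t =>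
      ∑ ζ, D ζ * ∏ i ∈ Finset.univ.filter (fun i : Fin N => (i : ℕ) < t), lf ζ x i (x i)
    let Ψ : Z → Z → (Fin N → Ω) → ℕ → ℝ := fun ζ ζ' x t =>
      ∏ i ∈ Finset.univ.filter (fun i : Fin N => (i : ℕ) < t),
        lf ζ x i (x i) * lf ζ' x i (x i)
    let φ : Z → Z → (Fin N → Ω) → Fin N → ℝ := fun ζ ζ' x t =>
      ∑ ω, q t ω * (g ζ t ((List.ofFn x).take (t : ℕ)) ω * g ζ' t ((List.ofFn x).take (t : ℕ)) ω)
    let P₁ : (Fin N → Ω) → ℝ := fun x => ∑ ζ, D ζ * P₀ x * ∏ i, lf ζ x i (x i)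
    (∑ x, P₁ x * Real.log (P₁ x / P₀ x))
      ≤ ∑ t : Fin N, ∑ x, P₀ x * (1 / Δ x (t : ℕ)) *
          (∑ ζ, ∑ ζ', D ζ * D ζ' * φ ζ ζ' x t * Ψ ζ ζ' x (t : ℕ)) := by
  intro P₀ lf Δ Ψ φ P₁
  classical
  have hΔ : ∀ (x : Fin N → Ω) (k : ℕ), Δ x k = auxDl D g x k := fun x k => rfl
  have hΨ : ∀ ζ ζ' (x : Fin N → Ω) (k : ℕ),
      Ψ ζ ζ' x k = auxLF g ζ x k * auxLF g ζ' x k := by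
    intro ζ ζ' x k
    simp only [Ψ, lf]
    exact Finset.prod_mul_distrib
  have hP₀pos : ∀ x, (0:ℝ) < P₀ x := fun x => Finset.prod_pos fun i _ => hq0 i (x i)
  have hP₁ : ∀ x, P₁ x = P₀ x * auxDl D g x N := by
    intro x
    simp only [P₁, lf]
    unfold auxDl
    rw [Finset.mul_sum]
    refine Finset.sum_congr rfl fun ζ _ => ?_
    rw [auxLF_N g ζ x]
    ring
  have hL : (∑ x, P₁ x * Real.log (P₁ x / P₀ x))
      = ∑ x : Fin N → Ω, (∏ i, q i (x i)) * (auxDl D g x N * Real.log (auxDl D g x N)) := by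
    refine Finset.sum_congr rfl fun x _ => ?_
    rw [hP₁ x, mul_div_cancel_left₀ _ (ne_of_gt (hP₀pos x))]
    simp only [P₀]
    ring
  rw [hL]
  have tele : ∑ x : Fin N → Ω, (∏ i, q i (x i)) * (auxDl D g x N * Real.log (auxDl D g x N))
      = ∑ t : Fin N, ∑ x : Fin N → Ω, (∏ i, q i (x i)) * (auxDl D g x N
          * (Real.log (auxDl D g x ((t : ℕ) + 1)) - Real.log (auxDl D g x (t : ℕ)))) := by
    rw [Finset.sum_comm]
    refine Finset.sum_congr rfl fun x _ => ?_
    have hsum : ∑ t : Fin N,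
        (Real.log (auxDl D g x ((t : ℕ) + 1)) - Real.log (auxDl D g x (t : ℕ)))
        = Real.log (auxDl D g x N) := by
      rw [Fin.sum_univ_eq_sum_range
          (fun k => Real.log (auxDl D g x (k + 1)) - Real.log (auxDl D g x k)) N,
        Finset.sum_range_sub (fun k => Real.log (auxDl D g x k)) N,
        auxDl_zero D g hD1 x, Real.log_one, sub_zero]
    calc (∏ i, q i (x i)) * (auxDl D g x N * Real.log (auxDl D g x N))
        = (∏ i, q i (x i)) * (auxDl D g x N * ∑ t : Fin N,
            (Real.log (auxDl D g x ((t : ℕ) + 1)) - Real.log (auxDl D g x (t : ℕ)))) := by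
          rw [hsum]
      _ = ∑ t : Fin N, (∏ i, q i (x i)) * (auxDl D g x N
            * (Real.log (auxDl D g x ((t : ℕ) + 1)) - Real.log (auxDl D g x (t : ℕ)))) := by
          rw [Finset.mul_sum, Finset.mul_sum]
  rw [tele]
  refine Finset.sum_le_sum fun t _ => ?_
  have htN : (t : ℕ) + 1 ≤ N := t.isLt
  have e1 : ∑ x : Fin N → Ω, (∏ i, q i (x i)) * (auxDl D g x N
        * (Real.log (auxDl D g x ((t : ℕ) + 1)) - Real.log (auxDl D g x (t : ℕ))))
      = ∑ x : Fin N → Ω, (∏ i, q i (x i)) * (auxDl D g x ((t : ℕ) + 1)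
        * (Real.log (auxDl D g x ((t : ℕ) + 1)) - Real.log (auxDl D g x (t : ℕ)))) := by
    exact marg q D g hq1 hmean ((t : ℕ) + 1)
      (fun x => Real.log (auxDl D g x ((t : ℕ) + 1)) - Real.log (auxDl D g x (t : ℕ)))
      (fun x s ω hs => by
        show Real.log (auxDl D g (Function.update x s ω) ((t : ℕ) + 1))
            - Real.log (auxDl D g (Function.update x s ω) (t : ℕ))
          = Real.log (auxDl D g x ((t : ℕ) + 1)) - Real.log (auxDl D g x (t : ℕ))
        rw [auxDl_update D g x s ω (by omega), auxDl_update D g x s ω (by omega)])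
      N htN le_rfl
  rw [e1]
  have e2 : ∑ x : Fin N → Ω, (∏ i, q i (x i)) * (auxDl D g x ((t : ℕ) + 1)
        * (Real.log (auxDl D g x ((t : ℕ) + 1)) - Real.log (auxDl D g x (t : ℕ))))
      ≤ ∑ x : Fin N → Ω, (∏ i, q i (x i))
        * ((1 / auxDl D g x (t : ℕ)) * (auxDl D g x ((t : ℕ) + 1))^2
          - auxDl D g x ((t : ℕ) + 1)) := by
    refine Finset.sum_le_sum fun x _ => ?_
    refine mul_le_mul_of_nonneg_left ?_
      (le_of_lt (Finset.prod_pos fun i _ => hq0 i (x i)))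
    exact log_chi_ineq (auxDl_nonneg D g hD0 hpos x ((t : ℕ) + 1))
      (auxDl_nonneg D g hD0 hpos x (t : ℕ))
      (fun h => auxDl_zero_mono D g hD0 hpos x (Nat.le_succ (t : ℕ)) h)
  refine le_trans e2 (le_of_eq ?_)
  have e3 : ∑ x : Fin N → Ω, (∏ i, q i (x i))
        * ((1 / auxDl D g x (t : ℕ)) * (auxDl D g x ((t : ℕ) + 1))^2
          - auxDl D g x ((t : ℕ) + 1))
      = (∑ x : Fin N → Ω, (∏ i, q i (x i))
          * ((1 / auxDl D g x (t : ℕ)) * (auxDl D g x ((t : ℕ) + 1))^2)) - 1 := by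
    simp only [mul_sub]
    rw [Finset.sum_sub_distrib, sum_P0_Dl q D g hq1 hD1 hmean ((t : ℕ) + 1) htN]
  rw [e3, chi_step q D g hq1 hmean t]
  have e4 : ∀ x : Fin N → Ω, (∏ i, q i (x i)) * ((1 / auxDl D g x (t : ℕ))
        * ∑ ζ, ∑ ζ', D ζ * D ζ'
          * ((1 + ∑ ω, q t ω * (g ζ t ((List.ofFn x).take (t : ℕ)) ω
              * g ζ' t ((List.ofFn x).take (t : ℕ)) ω))
            * (auxLF g ζ x (t : ℕ) * auxLF g ζ' x (t : ℕ))))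
      = (∏ i, q i (x i)) * auxDl D g x (t : ℕ)
        + (∏ i, q i (x i)) * ((1 / auxDl D g x (t : ℕ))
          * ∑ ζ, ∑ ζ', D ζ * D ζ'
            * ((∑ ω, q t ω * (g ζ t ((List.ofFn x).take (t : ℕ)) ω
                * g ζ' t ((List.ofFn x).take (t : ℕ)) ω))
              * (auxLF g ζ x (t : ℕ) * auxLF g ζ' x (t : ℕ)))) := by
    intro x
    have hsplit : ∑ ζ, ∑ ζ', D ζ * D ζ'
          * ((1 + ∑ ω, q t ω * (g ζ t ((List.ofFn x).take (t : ℕ)) ω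
              * g ζ' t ((List.ofFn x).take (t : ℕ)) ω))
            * (auxLF g ζ x (t : ℕ) * auxLF g ζ' x (t : ℕ)))
        = (∑ ζ, ∑ ζ', D ζ * D ζ' * (auxLF g ζ x (t : ℕ) * auxLF g ζ' x (t : ℕ)))
          + ∑ ζ, ∑ ζ', D ζ * D ζ'
            * ((∑ ω, q t ω * (g ζ t ((List.ofFn x).take (t : ℕ)) ω
                * g ζ' t ((List.ofFn x).take (t : ℕ)) ω))
              * (auxLF g ζ x (t : ℕ) * auxLF g ζ' x (t : ℕ))) := by
      rw [← Finset.sum_add_distrib]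
      refine Finset.sum_congr rfl fun ζ _ => ?_
      rw [← Finset.sum_add_distrib]
      exact Finset.sum_congr rfl fun ζ' _ => by ring
    rw [hsplit, sum_DD_psi D g x (t : ℕ),
      mul_add ((1:ℝ) / auxDl D g x (t : ℕ)), one_div_mul_sq, mul_add]
  have e5 : ∑ x : Fin N → Ω, (∏ i, q i (x i)) * ((1 / auxDl D g x (t : ℕ))
        * ∑ ζ, ∑ ζ', D ζ * D ζ'
          * ((1 + ∑ ω, q t ω * (g ζ t ((List.ofFn x).take (t : ℕ)) ω
              * g ζ' t ((List.ofFn x).take (t : ℕ)) ω))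
            * (auxLF g ζ x (t : ℕ) * auxLF g ζ' x (t : ℕ))))
      = 1 + ∑ x : Fin N → Ω, (∏ i, q i (x i)) * ((1 / auxDl D g x (t : ℕ))
          * ∑ ζ, ∑ ζ', D ζ * D ζ'
            * ((∑ ω, q t ω * (g ζ t ((List.ofFn x).take (t : ℕ)) ω
                * g ζ' t ((List.ofFn x).take (t : ℕ)) ω))
              * (auxLF g ζ x (t : ℕ) * auxLF g ζ' x (t : ℕ)))) := by
    rw [Finset.sum_congr rfl fun x _ => e4 x, Finset.sum_add_distrib,
      sum_P0_Dl q D g hq1 hD1 hmean (t : ℕ) (le_of_lt t.isLt)]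
  rw [e5, add_sub_cancel_left]
  refine Finset.sum_congr rfl fun x _ => ?_
  have hinner : (∑ ζ, ∑ ζ', D ζ * D ζ' * φ ζ ζ' x t * Ψ ζ ζ' x (t : ℕ))
      = ∑ ζ, ∑ ζ', D ζ * D ζ'
          * ((∑ ω, q t ω * (g ζ t ((List.ofFn x).take (t : ℕ)) ω
              * g ζ' t ((List.ofFn x).take (t : ℕ)) ω))
            * (auxLF g ζ x (t : ℕ) * auxLF g ζ' x (t : ℕ))) := by
    refine Finset.sum_congr rfl fun ζ _ => Finset.sum_congr rfl fun ζ' _ => ?_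
    rw [hΨ ζ ζ' x (t : ℕ)]
    simp only [φ]
    ring
  rw [hinner, hΔ x (t : ℕ)]
  simp only [P₀]
  ring
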